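/- Define, for integers ℓ ≥ 2 and i ≥ 0: F(ℓ,0) = 1, F(ℓ,1) = ℓ + 3, F(ℓ,i) = ℓ^i + 3·F(ℓ,i−1) for i ≥ 2; and S(ℓ,0) = 0, S(ℓ,1) = 6, S(ℓ,i) = min{ℓ·S(ℓ,i−1), (ℓ−1)·S(ℓ,i−1) + 4·F(ℓ,i−1)} for i ≥ 2. Then for every integer ℓ ≥ 4, setting c_ℓ = ℓ/(ℓ−3), for all integers i ≥ 1: F(ℓ,i) ≤ c_ℓ·ℓ^i, S(ℓ,i) ≤ 4·c_ℓ·ℓ^i, and S(ℓ,i) ≤ (4·c_ℓ·i + 2)·ℓ^{i−1}. -/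
import Mathlib


/-- The quantity `Fail(ℓ, i)` from the stretch analysis. -/
def Fail (ℓ : ℕ) : ℕ → ℕ
  | 0 => 1
  | 1 => ℓ + 3
  | (i + 2) => ℓ ^ (i + 2) + 3 * Fail ℓ (i + 1)

/-- The quantity `Succ(ℓ, i)` from the stretch analysis. -/
def Succ (ℓ : ℕ) : ℕ → ℕ
  | 0 => 0
  | 1 => 6
  | (i + 2) => min (ℓ * Succ ℓ (i + 1)) ((ℓ - 1) * Succ ℓ (i + 1) + 4 * Fail ℓ (i + 1))

theorem stmt_5 :
    ∀ ℓ : ℕ, 4 ≤ ℓ →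
      ∀ i : ℕ, 1 ≤ i →
        (Fail ℓ i : ℝ) ≤ (ℓ : ℝ) / ((ℓ : ℝ) - 3) * (ℓ : ℝ) ^ i ∧
        (Succ ℓ i : ℝ) ≤ 4 * ((ℓ : ℝ) / ((ℓ : ℝ) - 3)) * (ℓ : ℝ) ^ i ∧
        (Succ ℓ i : ℝ) ≤ (4 * ((ℓ : ℝ) / ((ℓ : ℝ) - 3)) * (i : ℝ) + 2) * (ℓ : ℝ) ^ (i - 1) := by
  intro ℓ hℓ
  have hL4 : (4:ℝ) ≤ (ℓ:ℝ) := by exact_mod_cast hℓ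
  set L : ℝ := (ℓ:ℝ) with hLdef
  have hpos : (0:ℝ) < L - 3 := by linarith
  have hc1 : (1:ℝ) ≤ L / (L - 3) := (le_div_iff₀ hpos).2 (by linarith)
  have hc0 : (0:ℝ) ≤ L / (L - 3) := by linarith
  set c : ℝ := L / (L - 3) with hcdef
  have hcL : c * (L - 3) = L := div_mul_cancel₀ _ (ne_of_gt hpos)
  intro i hi
  induction i, hi using Nat.le_induction with
  | base =>
    refine ⟨?_, ?_, ?_⟩
    · show ((ℓ + 3 : ℕ) : ℝ) ≤ c * L ^ 1
      push_cast
      nlinarith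
    · show ((6 : ℕ) : ℝ) ≤ 4 * c * L ^ 1
      push_cast
      nlinarith
    · show ((6 : ℕ) : ℝ) ≤ (4 * c * (1:ℕ) + 2) * L ^ (1 - 1)
      norm_num
      linarith
  | succ j hj ih =>
    obtain ⟨k, rfl⟩ : ∃ k, j = k + 1 := ⟨j - 1, (Nat.succ_pred_eq_of_pos hj).symm⟩
    obtain ⟨ihF, ihS1, ihS2⟩ := ih
    have hP0 : (0:ℝ) ≤ L ^ k := pow_nonneg (by linarith) k
    have hL0 : (0:ℝ) ≤ L := by linarith
    -- key identity : c * L = L + 3 * c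
    have hkey : c * L = L + 3 * c := by nlinarith
    have hFs : (Fail ℓ (k + 2) : ℝ) = L ^ (k + 2) + 3 * (Fail ℓ (k + 1) : ℝ) := by
      show ((ℓ ^ (k + 2) + 3 * Fail ℓ (k + 1) : ℕ) : ℝ) = _
      push_cast; ring
    have hF : (Fail ℓ (k + 2) : ℝ) ≤ c * L ^ (k + 2) := by
      rw [hFs]
      have : c * L ^ (k + 2) = L ^ (k + 2) + 3 * (c * L ^ (k + 1)) := by
        rw [show (k + 2) = (k + 1) + 1 by ring, pow_succ]
        linear_combination L ^ (k + 1) * hkey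
      rw [this]
      linarith
    refine ⟨hF, ?_, ?_⟩
    · -- Succ (k+2) ≤ ℓ * Succ (k+1) ≤ 4 c L^(k+2)
      have h1 : (Succ ℓ (k + 2) : ℝ) ≤ L * (Succ ℓ (k + 1) : ℝ) := by
        have h := min_le_left (ℓ * Succ ℓ (k + 1)) ((ℓ - 1) * Succ ℓ (k + 1) + 4 * Fail ℓ (k + 1))
        rw [hLdef]
        exact_mod_cast h
      have h2 : L * (Succ ℓ (k + 1) : ℝ) ≤ L * (4 * c * L ^ (k + 1)) := by
        exact mul_le_mul_of_nonneg_left ihS1 hL0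
      calc (Succ ℓ (k + 2) : ℝ) ≤ L * (4 * c * L ^ (k + 1)) := le_trans h1 h2
        _ = 4 * c * L ^ (k + 2) := by rw [show (k + 2) = (k + 1) + 1 by ring, pow_succ]; ring
    · -- third bound
      have h1 : (Succ ℓ (k + 2) : ℝ) ≤ (L - 1) * (Succ ℓ (k + 1) : ℝ) + 4 * (Fail ℓ (k + 1) : ℝ) := by
        have h := min_le_right (ℓ * Succ ℓ (k + 1)) ((ℓ - 1) * Succ ℓ (k + 1) + 4 * Fail ℓ (k + 1))
        have hcast : (((ℓ - 1) * Succ ℓ (k + 1) + 4 * Fail ℓ (k + 1) : ℕ) : ℝ)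
            = (L - 1) * (Succ ℓ (k + 1) : ℝ) + 4 * (Fail ℓ (k + 1) : ℝ) := by
          have h1ℓ : 1 ≤ ℓ := by omega
          push_cast [Nat.cast_sub h1ℓ]
          ring
        calc (Succ ℓ (k + 2) : ℝ) ≤ (((ℓ - 1) * Succ ℓ (k + 1) + 4 * Fail ℓ (k + 1) : ℕ) : ℝ) := by
              exact_mod_cast h
          _ = _ := hcast
      have hS : (Succ ℓ (k + 1) : ℝ) ≤ (4 * c * ((k:ℝ) + 1) + 2) * L ^ k := by
        have := ihS2
        push_cast at this
        simpa using this
      have hL1 : (0:ℝ) ≤ L - 1 := by linarith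
      have h2 : (L - 1) * (Succ ℓ (k + 1) : ℝ) ≤ (L - 1) * ((4 * c * ((k:ℝ) + 1) + 2) * L ^ k) :=
        mul_le_mul_of_nonneg_left hS hL1
      have h3 : 4 * (Fail ℓ (k + 1) : ℝ) ≤ 4 * (c * L ^ (k + 1)) :=
        mul_le_mul_of_nonneg_left ihF (by norm_num)
      have hfin : (L - 1) * ((4 * c * ((k:ℝ) + 1) + 2) * L ^ k) + 4 * (c * L ^ (k + 1))
          ≤ (4 * c * ((k:ℝ) + 2) + 2) * L ^ (k + 1) := by
        have e1 : L ^ (k + 1) = L ^ k * L := pow_succ L k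
        rw [e1]
        nlinarith [mul_nonneg hP0 (show (0:ℝ) ≤ 4 * c * ((k:ℝ) + 1) + 2 by positivity)]
      have hgoal : (Succ ℓ (k + 2) : ℝ) ≤ (4 * c * ((k:ℝ) + 2) + 2) * L ^ (k + 1) := by
        linarith
      show (Succ ℓ (k + 2) : ℝ) ≤ (4 * c * ((k + 2 : ℕ) : ℝ) + 2) * L ^ (k + 2 - 1)
      have : ((k + 2 : ℕ) : ℝ) = (k:ℝ) + 2 := by push_cast; ring
      rw [this, show k + 2 - 1 = k + 1 from rfl]
      exact hgoal
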